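/- Let A:[T,∞)→(0,∞) be locally absolutely continuous and F:[T,∞)→ℝ be right-continuous and nondecreasing with A'(t)=F(t) for a.e. t≥T. Suppose F(t)>0 for all t≥T and, for some constant C>1, the inequality F(t)² dt ≤ C·A(t) dF(t) holds as Radon measures on [T,∞). Then there exists c>0 such that A(t) ≥ c·t^{C/(C-1)} for all sufficiently large t. -/

import Mathlib

open MeasureTheory Set Filter

/-- If `W ⊆ Ioc s t` and `F ≤ c` on `W`, then `F.measure W ≤ ofReal (c - F s)`. -/
lemma aux_meas_bound (F : StieltjesFunction ℝ) {s t c : ℝ} {W : Set ℝ}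
    (hW : W ⊆ Ioc s t) (hc : ∀ u ∈ W, F u ≤ c) :
    F.measure W ≤ ENNReal.ofReal (c - F s) := by
  rcases W.eq_empty_or_nonempty with h | hne
  · simp [h]
  have hbdd : BddAbove W := ⟨t, fun u hu => (hW hu).2⟩
  set r := sSup W with hr
  have hrW : ∀ u ∈ W, u ≤ r := fun u hu => le_csSup hbdd hu
  have hsr : ∀ u ∈ W, s < u := fun u hu => (hW hu).1
  by_cases hmem : r ∈ W
  · calc F.measure W ≤ F.measure (Ioc s r) := by
          apply measure_mono
          intro u hu; exact ⟨hsr u hu, hrW u hu⟩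
      _ = ENNReal.ofReal (F r - F s) := F.measure_Ioc s r
      _ ≤ ENNReal.ofReal (c - F s) := by
          apply ENNReal.ofReal_le_ofReal; linarith [hc r hmem]
  · have hWsub : W ⊆ Ioo s r := by
      intro u hu
      refine ⟨hsr u hu, lt_of_le_of_ne (hrW u hu) ?_⟩
      rintro rfl; exact hmem hu
    have hll : Function.leftLim F r ≤ c := by
      apply le_of_tendsto (F.mono.tendsto_leftLim r)
      filter_upwards [self_mem_nhdsWithin] with u (hu : u < r)
      obtain ⟨w, hwW, hw⟩ := exists_lt_of_lt_csSup hne hu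
      exact (F.mono hw.le).trans (hc w hwW)
    calc F.measure W ≤ F.measure (Ioo s r) := measure_mono hWsub
      _ = ENNReal.ofReal (Function.leftLim F r - F s) := F.measure_Ioo
      _ ≤ ENNReal.ofReal (c - F s) := by
          apply ENNReal.ofReal_le_ofReal; linarith

/-- `∫_{(s,t]} 1/F dF ≤ log F(t) - log F(s)` for a positive Stieltjes function. -/
lemma aux_stieltjes_log (F : StieltjesFunction ℝ) {s t : ℝ} (hst : s ≤ t) (hs : 0 < F s) :
    ∫⁻ u in Ioc s t, ENNReal.ofReal (F u)⁻¹ ∂F.measure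
      ≤ ENNReal.ofReal (Real.log (F t) - Real.log (F s)) := by
  set a := F s with ha_def
  set b := F t with hb_def
  have hab : a ≤ b := F.mono hst
  have hb : 0 < b := lt_of_lt_of_le hs hab
  have hbinv : (0:ℝ) < b⁻¹ := by positivity
  have hainv : b⁻¹ ≤ a⁻¹ := by gcongr
  -- layer cake
  have f_mble : AEMeasurable (fun u => (F u)⁻¹) (F.measure.restrict (Ioc s t)) :=
    (F.mono.measurable.inv).aemeasurable
  have f_nn : 0 ≤ᵐ[F.measure.restrict (Ioc s t)] fun u => (F u)⁻¹ := by
    refine (ae_restrict_iff' measurableSet_Ioc).mpr ?_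
    exact ae_of_all _ fun u hu =>
      inv_nonneg.mpr (le_of_lt (lt_of_lt_of_le hs (F.mono hu.1.le)))
  rw [lintegral_eq_lintegral_meas_le _ f_nn f_mble]
  -- pointwise bound on the distribution function
  have key : ∀ l ∈ Ioi (0:ℝ),
      (F.measure.restrict (Ioc s t)) {u : ℝ | l ≤ (F u)⁻¹}
        ≤ ENNReal.ofReal (min l⁻¹ b - a) := by
    intro l hl
    have hl' : (0:ℝ) < l := hl
    have hSm : MeasurableSet {u : ℝ | l ≤ (F u)⁻¹} :=
      measurableSet_le measurable_const F.mono.measurable.inv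
    rw [Measure.restrict_apply hSm]
    apply aux_meas_bound F (W := {u : ℝ | l ≤ (F u)⁻¹} ∩ Ioc s t) inter_subset_right
    rintro u ⟨hu1, hu2⟩
    have hFu : 0 < F u := lt_of_lt_of_le hs (F.mono hu2.1.le)
    have h1 : F u ≤ l⁻¹ := by
      rw [← inv_inv (F u)]
      exact inv_anti₀ hl' hu1
    exact le_min h1 (F.mono hu2.2)
  -- split the outer integral
  have hsplit1 : Ioi (0:ℝ) = Ioc 0 a⁻¹ ∪ Ioi a⁻¹ := (Ioc_union_Ioi_eq_Ioi (by positivity)).symm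
  have hsplit2 : Ioc (0:ℝ) a⁻¹ = Ioc 0 b⁻¹ ∪ Ioc b⁻¹ a⁻¹ :=
    (Ioc_union_Ioc_eq_Ioc hbinv.le hainv).symm
  calc ∫⁻ l in Ioi 0, (F.measure.restrict (Ioc s t)) {u : ℝ | l ≤ (F u)⁻¹}
      ≤ ∫⁻ l in Ioi 0, ENNReal.ofReal (min l⁻¹ b - a) := by
        apply setLIntegral_mono' measurableSet_Ioi key
    _ = (∫⁻ l in Ioc (0:ℝ) b⁻¹, ENNReal.ofReal (min l⁻¹ b - a))
        + (∫⁻ l in Ioc b⁻¹ a⁻¹, ENNReal.ofReal (min l⁻¹ b - a))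
        + (∫⁻ l in Ioi a⁻¹, ENNReal.ofReal (min l⁻¹ b - a)) := by
        rw [hsplit1, hsplit2,
          lintegral_union measurableSet_Ioi (hsplit2 ▸ Ioc_disjoint_Ioi le_rfl),
          lintegral_union measurableSet_Ioc (Ioc_disjoint_Ioc_of_le le_rfl)]
    _ ≤ ENNReal.ofReal ((b - a) * b⁻¹) + ENNReal.ofReal (Real.log b - Real.log a - 1 + a * b⁻¹)
        + 0 := by
        gcongr
        · -- first piece
          have : ∀ l ∈ Ioc (0:ℝ) b⁻¹, ENNReal.ofReal (min l⁻¹ b - a) = ENNReal.ofReal (b - a) := by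
            intro l hl
            have : b ≤ l⁻¹ := by
              rw [← inv_inv b]; exact inv_anti₀ hl.1 hl.2
            rw [min_eq_right this]
          rw [setLIntegral_congr_fun measurableSet_Ioc this, setLIntegral_const,
            Real.volume_Ioc, ENNReal.ofReal_mul (by linarith)]
          simp
        · -- second piece
          have hcong : ∀ l ∈ Ioc b⁻¹ a⁻¹, ENNReal.ofReal (min l⁻¹ b - a) = ENNReal.ofReal (l⁻¹ - a) := by
            intro l hl
            have hl0 : (0:ℝ) < l := lt_of_lt_of_le hbinv hl.1.le
            have : l⁻¹ ≤ b := by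
              rw [← inv_inv b]; exact inv_anti₀ (by positivity) hl.1.le
            rw [min_eq_left this]
          rw [setLIntegral_congr_fun measurableSet_Ioc hcong]
          have hInt : IntegrableOn (fun l : ℝ => l⁻¹ - a) (Ioc b⁻¹ a⁻¹) := by
            apply IntegrableOn.mono_set _ Ioc_subset_Icc_self
            apply ContinuousOn.integrableOn_Icc
            intro x hx
            have : x ≠ 0 := by
              have := hx.1; intro h; rw [h] at this; exact absurd this (not_le.mpr hbinv)
            exact ((continuousAt_inv₀ this).continuousWithinAt).sub continuousWithinAt_const
          rw [← ofReal_integral_eq_lintegral_ofReal hInt]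
          · apply le_of_eq; congr 1
            have : ∫ l in Ioc b⁻¹ a⁻¹, (l⁻¹ - a) = ∫ l in b⁻¹..a⁻¹, (l⁻¹ - a) :=
              (intervalIntegral.integral_of_le hainv).symm
            rw [this, intervalIntegral.integral_sub, integral_inv_of_pos hbinv (by positivity),
              intervalIntegral.integral_const]
            · rw [Real.log_div (by positivity) (by positivity), Real.log_inv, Real.log_inv]
              field_simp
              rw [smul_eq_mul, mul_sub, show b * ((b - a) / (a * b) * a) = b - a by field_simp]
              ring
            · apply ContinuousOn.intervalIntegrable
              intro x hx
              rw [uIcc_of_le hainv] at hx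
              have : x ≠ 0 := by
                have := hx.1; intro h; rw [h] at this; exact absurd this (not_le.mpr hbinv)
              exact (continuousAt_inv₀ this).continuousWithinAt
            · exact intervalIntegrable_const
          · refine (ae_restrict_iff' measurableSet_Ioc).mpr (ae_of_all _ ?_)
            intro l hl
            have : a ≤ l⁻¹ := by
              rw [← inv_inv a]; exact inv_anti₀ (hbinv.trans hl.1) hl.2
            show (0:ℝ) ≤ l⁻¹ - a
            linarith
        · -- third piece is zero
          have : ∀ l ∈ Ioi a⁻¹, ENNReal.ofReal (min l⁻¹ b - a) = 0 := by
            intro l hl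
            have hl0 : (0:ℝ) < l := lt_of_le_of_lt (by positivity) hl
            have : l⁻¹ ≤ a := by
              rw [← inv_inv a]; exact (inv_anti₀ (by positivity) (le_of_lt hl))
            apply ENNReal.ofReal_eq_zero.mpr
            have := min_le_left l⁻¹ b
            linarith
          rw [setLIntegral_congr_fun measurableSet_Ioi this]
          simp
    _ = ENNReal.ofReal (Real.log b - Real.log a) := by
        rw [add_zero, ← ENNReal.ofReal_add (mul_nonneg (by linarith) hbinv.le)]
        · congr 1
          field_simp
          ring
        · have hx : a * b⁻¹ ≤ 1 := by
            rw [mul_inv_le_iff₀' hb]; linarith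
          have hlog : Real.log (a / b) ≤ a / b - 1 := Real.log_le_sub_one_of_pos (by positivity)
          rw [Real.log_div (by positivity) (by positivity)] at hlog
          have : a / b = a * b⁻¹ := div_eq_mul_inv a b
          linarith [hlog, this ▸ hlog]

open Topology ENNReal



lemma aux_ii {g : ℝ → ℝ} (hg : Measurable g) {a b M : ℝ} (hab : a ≤ b)
    (hM : ∀ u ∈ Ioc a b, |g u| ≤ M) : IntervalIntegrable g volume a b := by
  rw [intervalIntegrable_iff, uIoc_of_le hab]
  apply Integrable.mono' (integrable_const M) hg.aestronglyMeasurable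
  exact (ae_restrict_iff' measurableSet_Ioc).mpr (ae_of_all _ hM)

lemma aux_rderiv (T : ℝ) (A : ℝ → ℝ) (F : StieltjesFunction ℝ)
    (hFTC : ∀ a b : ℝ, T ≤ a → a ≤ b → A b - A a = ∫ t in a..b, F t) {x : ℝ} (hx : T ≤ x) :
    HasDerivWithinAt A (F x) (Ioi x) x := by
  rw [hasDerivWithinAt_iff_tendsto_slope' (notMem_Ioi.mpr le_rfl)]
  have hF : Tendsto F (𝓝[>] x) (𝓝 (F x)) :=
    (F.right_continuous x).mono Ioi_subset_Ici_self
  apply tendsto_of_tendsto_of_tendsto_of_le_of_le' tendsto_const_nhds hF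
  · filter_upwards [self_mem_nhdsWithin] with y (hy : x < y)
    rw [slope_def_field]
    rw [le_div_iff₀ (by linarith)]
    rw [hFTC x y hx hy.le]
    calc F x * (y - x) = ∫ _ in x..y, F x := by rw [intervalIntegral.integral_const, smul_eq_mul]; ring
      _ ≤ ∫ t in x..y, F t := by
          apply intervalIntegral.integral_mono_on hy.le intervalIntegrable_const
            (F.mono.intervalIntegrable)
          intro u hu; exact F.mono hu.1
  · filter_upwards [self_mem_nhdsWithin] with y (hy : x < y)
    rw [slope_def_field, div_le_iff₀ (by linarith)]
    rw [hFTC x y hx hy.le]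
    calc (∫ t in x..y, F t) ≤ ∫ _ in x..y, F y := by
          apply intervalIntegral.integral_mono_on hy.le (F.mono.intervalIntegrable)
            intervalIntegrable_const
          intro u hu; exact F.mono hu.2
      _ = F y * (y - x) := by rw [intervalIntegral.integral_const, smul_eq_mul]; ring


lemma aux_measure_le (T C : ℝ) (hC : 0 < C) (Ab : ℝ → ℝ) (F : StieltjesFunction ℝ)
    (hAb : Continuous Ab) (hAbnn : ∀ u, 0 ≤ Ab u)
    (hmeas : ∀ E : Set ℝ, MeasurableSet E → E ⊆ Ici T →
      ∫ t in E, (F t) ^ 2 ≤ C * ∫ t in E, Ab t ∂F.measure) :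
    (volume.restrict (Ici T)).withDensity (fun u => ENNReal.ofReal ((F u) ^ 2))
      ≤ (F.measure.restrict (Ici T)).withDensity (fun u => ENNReal.ofReal (C * Ab u)) := by
  set μ := (volume.restrict (Ici T)).withDensity (fun u => ENNReal.ofReal ((F u) ^ 2)) with hμ
  set ν := (F.measure.restrict (Ici T)).withDensity (fun u => ENNReal.ofReal (C * Ab u)) with hν
  rw [Measure.le_iff]
  intro E hE
  have key : ∀ n : ℕ, μ (E ∩ Iic (n : ℝ)) ≤ ν E := by
    intro n
    set D := (E ∩ Iic (n : ℝ)) ∩ Ici T with hD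
    have hDmeas : MeasurableSet D := (hE.inter measurableSet_Iic).inter measurableSet_Ici
    have hDsub : D ⊆ Ici T := inter_subset_right
    have hDIcc : D ⊆ Icc T n := fun u hu => ⟨hu.2, hu.1.2⟩
    -- integrability of F^2 on D w.r.t. volume
    haveI : IsFiniteMeasure (volume.restrict (Icc T (n:ℝ))) := by
      constructor
      rw [Measure.restrict_apply_univ, Real.volume_Icc]
      exact ENNReal.ofReal_lt_top
    have hFint : IntegrableOn (fun u => (F u) ^ 2) D volume := by
      apply IntegrableOn.mono_set _ hDIcc
      apply Integrable.mono' (integrable_const ((max |F T| |F (n:ℝ)|) ^ 2))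
        ((F.mono.measurable.pow_const 2).aestronglyMeasurable)
      refine (ae_restrict_iff' measurableSet_Icc).mpr (ae_of_all _ ?_)
      intro u hu
      rw [Real.norm_eq_abs, abs_pow, sq_abs]
      apply sq_le_sq'
      · calc -(max |F T| |F (n:ℝ)|) ≤ -|F T| := by simp [neg_le_neg_iff]
          _ ≤ F T := neg_abs_le _
          _ ≤ F u := F.mono hu.1
      · calc F u ≤ F (n:ℝ) := F.mono hu.2
          _ ≤ |F (n:ℝ)| := le_abs_self _
          _ ≤ max |F T| |F (n:ℝ)| := le_max_right _ _
    -- integrability of Ab on D w.r.t. F.measure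
    haveI : IsFiniteMeasure (F.measure.restrict (Icc T (n:ℝ))) := by
      constructor
      rw [Measure.restrict_apply_univ, F.measure_Icc]
      exact ENNReal.ofReal_lt_top
    obtain ⟨M, hM⟩ := isCompact_Icc.exists_bound_of_continuousOn (hAb.continuousOn (s := Icc T (n:ℝ)))
    have hAint : IntegrableOn Ab D F.measure := by
      apply IntegrableOn.mono_set _ hDIcc
      apply Integrable.mono' (integrable_const M) hAb.aestronglyMeasurable
      exact (ae_restrict_iff' measurableSet_Icc).mpr (ae_of_all _ hM)
    have h1 : μ (E ∩ Iic (n : ℝ)) = ENNReal.ofReal (∫ u in D, (F u) ^ 2) := by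
      rw [hμ, withDensity_apply _ (hE.inter measurableSet_Iic),
        Measure.restrict_restrict (hE.inter measurableSet_Iic),
        ofReal_integral_eq_lintegral_ofReal hFint (ae_of_all _ fun u => sq_nonneg _)]
    have h2 : ν D = ENNReal.ofReal (C * ∫ u in D, Ab u ∂F.measure) := by
      rw [hν, withDensity_apply _ hDmeas, Measure.restrict_restrict hDmeas,
        inter_eq_self_of_subset_left hDsub,
        ← ofReal_integral_eq_lintegral_ofReal (hAint.const_mul C)
          (ae_of_all _ fun u => mul_nonneg hC.le (hAbnn u))]
      rw [integral_const_mul]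
    calc μ (E ∩ Iic (n:ℝ)) = ENNReal.ofReal (∫ u in D, (F u) ^ 2) := h1
      _ ≤ ENNReal.ofReal (C * ∫ u in D, Ab u ∂F.measure) :=
          ENNReal.ofReal_le_ofReal (hmeas D hDmeas hDsub)
      _ = ν D := h2.symm
      _ ≤ ν E := by
          apply measure_mono
          intro u hu; exact hu.1.1
  have hEeq : E = ⋃ n : ℕ, E ∩ Iic (n : ℝ) := by
    ext u
    simp only [mem_iUnion, mem_inter_iff, mem_Iic]
    constructor
    · intro hu
      obtain ⟨n, hn⟩ := exists_nat_ge u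
      exact ⟨n, hu, hn⟩
    · rintro ⟨n, hu, -⟩; exact hu
  have hmono : Monotone (fun n : ℕ => E ∩ Iic (n : ℝ)) := by
    intro m k hmk
    apply inter_subset_inter_right
    exact Iic_subset_Iic.mpr (by exact_mod_cast hmk)
  calc μ E = μ (⋃ n : ℕ, E ∩ Iic (n : ℝ)) := by rw [← hEeq]
    _ = ⨆ n : ℕ, μ (E ∩ Iic (n : ℝ)) :=
        hmono.measure_iUnion
    _ ≤ ν E := iSup_le key


lemma aux_weighted (T C : ℝ) (hC : 0 < C) (Ab : ℝ → ℝ) (F : StieltjesFunction ℝ)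
    (hAb : Continuous Ab) (hAbpos : ∀ u, 0 < Ab u)
    (hFpos : ∀ u, T ≤ u → 0 < F u)
    (hle : (volume.restrict (Ici T)).withDensity (fun u => ENNReal.ofReal ((F u) ^ 2))
      ≤ (F.measure.restrict (Ici T)).withDensity (fun u => ENNReal.ofReal (C * Ab u)))
    {s t : ℝ} (hs : T ≤ s) (hst : s ≤ t) :
    ∫⁻ u in Ioc s t, ENNReal.ofReal (F u / Ab u)
      ≤ ENNReal.ofReal C * ∫⁻ u in Ioc s t, ENNReal.ofReal (F u)⁻¹ ∂F.measure := by
  set f : ℝ → ℝ≥0∞ := fun u => ENNReal.ofReal ((F u) ^ 2) with hf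
  set h : ℝ → ℝ≥0∞ := fun u => ENNReal.ofReal (C * Ab u) with hh
  set g : ℝ → ℝ≥0∞ := fun u => ENNReal.ofReal ((F u * Ab u)⁻¹) with hg
  have hfm : Measurable f := (F.mono.measurable.pow_const 2).ennreal_ofReal
  have hhm : Measurable h := (hAb.measurable.const_mul C).ennreal_ofReal
  have hgm : Measurable g := ((F.mono.measurable.mul hAb.measurable).inv).ennreal_ofReal
  have hsub : Ioc s t ⊆ Ici T := fun u hu => le_trans hs hu.1.le
  have hrr : ∀ (ρ : Measure ℝ), (ρ.restrict (Ici T)).restrict (Ioc s t) = ρ.restrict (Ioc s t) := by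
    intro ρ
    rw [Measure.restrict_restrict measurableSet_Ioc, inter_eq_self_of_subset_left hsub]
  calc ∫⁻ u in Ioc s t, ENNReal.ofReal (F u / Ab u)
      = ∫⁻ u in Ioc s t, (f * g) u := by
        apply setLIntegral_congr_fun measurableSet_Ioc
        intro u hu
        have h1 : 0 < F u := hFpos u (hsub hu)
        have h2 : 0 < Ab u := hAbpos u
        simp only [hf, hg, Pi.mul_apply]
        rw [← ENNReal.ofReal_mul (sq_nonneg _)]
        congr 1
        field_simp
    _ = ∫⁻ u, g u ∂(((volume.restrict (Ici T)).withDensity f).restrict (Ioc s t)) := by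
        rw [restrict_withDensity measurableSet_Ioc,
          lintegral_withDensity_eq_lintegral_mul _ hfm hgm, hrr]
    _ ≤ ∫⁻ u, g u ∂(((F.measure.restrict (Ici T)).withDensity h).restrict (Ioc s t)) :=
        lintegral_mono' (Measure.restrict_mono (subset_refl _) hle) le_rfl
    _ = ∫⁻ u in Ioc s t, (h * g) u ∂F.measure := by
        rw [restrict_withDensity measurableSet_Ioc,
          lintegral_withDensity_eq_lintegral_mul _ hhm hgm, hrr]
    _ = ∫⁻ u in Ioc s t, ENNReal.ofReal C * ENNReal.ofReal (F u)⁻¹ ∂F.measure := by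
        apply setLIntegral_congr_fun measurableSet_Ioc
        intro u hu
        have h1 : 0 < F u := hFpos u (hsub hu)
        have h2 : 0 < Ab u := hAbpos u
        simp only [hh, hg, Pi.mul_apply]
        rw [← ENNReal.ofReal_mul (by positivity), ← ENNReal.ofReal_mul hC.le]
        congr 1
        field_simp
    _ = ENNReal.ofReal C * ∫⁻ u in Ioc s t, ENNReal.ofReal (F u)⁻¹ ∂F.measure := by
        rw [lintegral_const_mul (f := fun u => ENNReal.ofReal (F u)⁻¹) _ (F.mono.measurable.inv.ennreal_ofReal)]

/-- if `A' = F` a.e. on `[T,∞)` (expressed via the fundamental theorem of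
calculus for the locally absolutely continuous function `A`), `F` is a right-continuous
nondecreasing function (a `StieltjesFunction`) which is positive on `[T,∞)`, and the
Radon measure inequality `F(t)² dt ≤ C · A(t) dF(t)` holds on Borel subsets of `[T,∞)`
with `C > 1`, then `A(t) ≥ c · t^{C/(C-1)}` for all sufficiently large `t`. -/
theorem stmt_0 (T C : ℝ) (hC : 1 < C) (A : ℝ → ℝ) (F : StieltjesFunction ℝ)
    (hApos : ∀ t, T ≤ t → 0 < A t)
    (hAcont : ContinuousOn A (Ici T))
    (hFTC : ∀ a b : ℝ, T ≤ a → a ≤ b → A b - A a = ∫ t in a..b, F t)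
    (hFpos : ∀ t, T ≤ t → 0 < F t)
    (hmeas : ∀ E : Set ℝ, MeasurableSet E → E ⊆ Ici T →
      ∫ t in E, (F t) ^ 2 ≤ C * ∫ t in E, A t ∂F.measure) :
    ∃ c > 0, ∀ᶠ t in atTop, c * t ^ (C / (C - 1)) ≤ A t := by
  have hC0 : (0:ℝ) < C := by linarith
  -- continuous extension of A
  set Ab : ℝ → ℝ := fun u => A (max u T) with hAb_def
  have hAbCont : Continuous Ab :=
    hAcont.comp_continuous (continuous_id.max continuous_const) (fun x => mem_Ici.mpr (le_max_right _ _))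
  have hAbpos : ∀ u, 0 < Ab u := fun u => hApos _ (le_max_right _ _)
  have hAbeq : ∀ u, T ≤ u → Ab u = A u := by
    intro u hu; simp only [hAb_def, max_eq_left hu]
  have hAbFTC : ∀ a b : ℝ, T ≤ a → a ≤ b → Ab b - Ab a = ∫ t in a..b, F t := by
    intro a b ha hab
    rw [hAbeq a ha, hAbeq b (ha.trans hab)]
    exact hFTC a b ha hab
  have hAbmono : ∀ a b : ℝ, T ≤ a → a ≤ b → Ab a ≤ Ab b := by
    intro a b ha hab
    have := hAbFTC a b ha hab
    have hnn : (0:ℝ) ≤ ∫ t in a..b, F t :=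
      intervalIntegral.integral_nonneg hab (fun u hu => (hFpos u (ha.trans hu.1)).le)
    linarith
  have hmeas' : ∀ E : Set ℝ, MeasurableSet E → E ⊆ Ici T →
      ∫ t in E, (F t) ^ 2 ≤ C * ∫ t in E, Ab t ∂F.measure := by
    intro E hE hEsub
    have : ∫ t in E, Ab t ∂F.measure = ∫ t in E, A t ∂F.measure :=
      setIntegral_congr_fun hE (fun u hu => hAbeq u (hEsub hu))
    rw [this]
    exact hmeas E hE hEsub
  have hle := aux_measure_le T C hC0 Ab F hAbCont (fun u => (hAbpos u).le) hmeas'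
  -- the key log-inequality
  have key : ∀ s t : ℝ, T ≤ s → s ≤ t →
      Real.log (Ab t) - Real.log (Ab s) ≤ C * (Real.log (F t) - Real.log (F s)) := by
    intro s t hs hst
    have hFs : 0 < F s := hFpos s hs
    have hFt : 0 < F t := hFpos t (hs.trans hst)
    -- FTC for log ∘ Ab
    have hcont : ContinuousOn (fun u => Real.log (Ab u)) (Icc s t) := by
      apply Continuous.continuousOn
      rw [continuous_iff_continuousAt]
      intro x
      exact (Real.continuousAt_log (ne_of_gt (hAbpos x))).comp hAbCont.continuousAt
    have hd : ∀ x ∈ Ioo s t, HasDerivWithinAt (fun u => Real.log (Ab u))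
        (F x / Ab x) (Ioi x) x := by
      intro x hx
      have hAx := aux_rderiv T Ab F hAbFTC (hs.trans hx.1.le)
      have := (Real.hasDerivAt_log (ne_of_gt (hAbpos x))).comp_hasDerivWithinAt x hAx
      rw [div_eq_inv_mul]
      exact this
    have hint : IntervalIntegrable (fun u => F u / Ab u) volume s t := by
      apply aux_ii (F.mono.measurable.div hAbCont.measurable) hst
      intro u hu
      have h1 : 0 < F u := hFpos u (hs.trans hu.1.le)
      have h2 : 0 < Ab u := hAbpos u
      have h3 : Ab s ≤ Ab u := hAbmono s u hs hu.1.le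
      have h4 : F u ≤ F t := F.mono hu.2
      rw [Pi.div_apply, abs_of_nonneg (div_pos h1 h2).le]
      calc F u / Ab u ≤ F t / Ab s :=
            div_le_div₀ (hFpos t (hs.trans hst)).le h4 (hAbpos s) h3
        _ ≤ F t / Ab s := le_rfl
    have hFTClog : ∫ u in s..t, F u / Ab u
        = Real.log (Ab t) - Real.log (Ab s) :=
      intervalIntegral.integral_eq_sub_of_hasDeriv_right_of_le hst hcont hd hint
    -- bound the integral using the measure inequality and the Stieltjes log bound
    have hI0 : (0:ℝ) ≤ ∫ u in Ioc s t, F u / Ab u := by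
      apply setIntegral_nonneg measurableSet_Ioc
      intro u hu
      have h1 : 0 < F u := hFpos u (hs.trans hu.1.le)
      have h2 : 0 < Ab u := hAbpos u
      positivity
    have hRHS0 : 0 ≤ C * (Real.log (F t) - Real.log (F s)) := by
      apply mul_nonneg hC0.le
      have := Real.log_le_log hFs (F.mono hst)
      linarith
    have hchain : ENNReal.ofReal (∫ u in Ioc s t, F u / Ab u)
        ≤ ENNReal.ofReal (C * (Real.log (F t) - Real.log (F s))) := by
      rw [ofReal_integral_eq_lintegral_ofReal
        ((intervalIntegrable_iff_integrableOn_Ioc_of_le hst).mp hint)]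
      · calc ∫⁻ u in Ioc s t, ENNReal.ofReal (F u / Ab u)
            ≤ ENNReal.ofReal C * ∫⁻ u in Ioc s t, ENNReal.ofReal (F u)⁻¹ ∂F.measure :=
              aux_weighted T C hC0 Ab F hAbCont hAbpos hFpos hle hs hst
          _ ≤ ENNReal.ofReal C * ENNReal.ofReal (Real.log (F t) - Real.log (F s)) := by
              gcongr
              exact aux_stieltjes_log F hst hFs
          _ = ENNReal.ofReal (C * (Real.log (F t) - Real.log (F s))) :=
              (ENNReal.ofReal_mul hC0.le).symm
      · refine (ae_restrict_iff' measurableSet_Ioc).mpr (ae_of_all _ ?_)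
        intro u hu
        have h1 : 0 < F u := hFpos u (hs.trans hu.1.le)
        have h2 : 0 < Ab u := hAbpos u
        show (0:ℝ) ≤ F u / Ab u
        positivity
    have : (∫ u in Ioc s t, F u / Ab u) ≤ C * (Real.log (F t) - Real.log (F s)) :=
      (ENNReal.ofReal_le_ofReal_iff hRHS0).mp hchain
    calc Real.log (Ab t) - Real.log (Ab s) = ∫ u in s..t, F u / Ab u := hFTClog.symm
      _ = ∫ u in Ioc s t, F u / Ab u := intervalIntegral.integral_of_le hst
      _ ≤ C * (Real.log (F t) - Real.log (F s)) := this
  -- pointwise lower bound on F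
  set K : ℝ := F T * ((Ab T) ^ (C⁻¹))⁻¹ with hK_def
  have hK : 0 < K := by
    have h1 : 0 < F T := hFpos T le_rfl
    have h2 : 0 < Ab T := hAbpos T
    have h3 : 0 < (Ab T) ^ (C⁻¹) := Real.rpow_pos_of_pos h2 _
    positivity
  have hFK : ∀ u, T ≤ u → K * (Ab u) ^ C⁻¹ ≤ F u := by
    intro u hu
    have h1 : 0 < F T := hFpos T le_rfl
    have h2 : 0 < Ab T := hAbpos T
    have h3 : 0 < Ab u := hAbpos u
    have h4 : 0 < F u := hFpos u hu
    have h5 : 0 < (Ab u) ^ C⁻¹ := Real.rpow_pos_of_pos h3 _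
    have h6 : 0 < (Ab T) ^ C⁻¹ := Real.rpow_pos_of_pos h2 _
    have hkey := key T u le_rfl hu
    rw [← Real.log_le_log_iff (by positivity) h4]
    rw [Real.log_mul (ne_of_gt hK) (ne_of_gt h5), Real.log_rpow h3,
      hK_def, Real.log_mul (ne_of_gt h1) (ne_of_gt (inv_pos.mpr h6)),
      Real.log_inv, Real.log_rpow h2]
    have hC' : C⁻¹ * (Real.log (Ab u) - Real.log (Ab T))
        ≤ Real.log (F u) - Real.log (F T) := by
      have h := mul_le_mul_of_nonneg_left hkey (le_of_lt (inv_pos.mpr hC0))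
      calc C⁻¹ * (Real.log (Ab u) - Real.log (Ab T))
          ≤ C⁻¹ * (C * (Real.log (F u) - Real.log (F T))) := h
        _ = Real.log (F u) - Real.log (F T) := by field_simp
    linarith
  -- ODE comparison via FTC for Ab^β
  set β : ℝ := 1 - C⁻¹ with hβ_def
  have hβpos : 0 < β := by
    rw [hβ_def]
    have h1 : C⁻¹ < 1 := inv_lt_one_of_one_lt₀ hC
    linarith
  have claim : ∀ b : ℝ, T ≤ b → β * K * (b - T) ≤ (Ab b) ^ β := by
    intro b hb
    set d : ℝ → ℝ := fun x => β * (F x / (Ab x) ^ C⁻¹) with hd_def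
    have hd : ∀ x ∈ Ioo T b, HasDerivWithinAt (fun u => (Ab u) ^ β) (d x) (Ioi x) x := by
      intro x hx
      have hAx := aux_rderiv T Ab F hAbFTC hx.1.le
      have h3 : 0 < Ab x := hAbpos x
      have hr := Real.hasDerivAt_rpow_const (p := β) (Or.inl (ne_of_gt h3))
      have hcomp := hr.comp_hasDerivWithinAt x hAx
      have hb2 : (Ab x) ^ (β - 1) = ((Ab x) ^ C⁻¹)⁻¹ := by
        have hb3 : β - 1 = -C⁻¹ := by rw [hβ_def]; ring
        rw [hb3, Real.rpow_neg h3.le]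
      have hgoal : β * (F x / (Ab x) ^ C⁻¹) = β * Ab x ^ (β - 1) * F x := by
        rw [hb2, div_eq_mul_inv]; ring
      simp only [hd_def]
      rw [hgoal]
      exact hcomp
    have hcont : ContinuousOn (fun u => (Ab u) ^ β) (Icc T b) :=
      (hAbCont.rpow_const (fun x => Or.inl (ne_of_gt (hAbpos x)))).continuousOn
    have hint : IntervalIntegrable d volume T b := by
      apply aux_ii ((F.mono.measurable.div
        (hAbCont.rpow_const (fun x => Or.inl (ne_of_gt (hAbpos x)))).measurable).const_mul β) hb
      intro u hu
      have h1 : 0 < F u := hFpos u hu.1.le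
      have h3 : 0 < Ab u := hAbpos u
      have h5 : (0:ℝ) < (Ab u) ^ C⁻¹ := Real.rpow_pos_of_pos h3 _
      have h6 : (0:ℝ) < (Ab T) ^ C⁻¹ := Real.rpow_pos_of_pos (hAbpos T) _
      have h7 : (Ab T) ^ C⁻¹ ≤ (Ab u) ^ C⁻¹ :=
        Real.rpow_le_rpow (hAbpos T).le (hAbmono T u le_rfl hu.1.le) (by positivity)
      have h8 : F u ≤ F b := F.mono hu.2
      show |β * (F u / Ab u ^ C⁻¹)| ≤ β * (F b / Ab T ^ C⁻¹)
      rw [abs_of_nonneg (mul_nonneg hβpos.le (div_nonneg h1.le h5.le))]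
      apply mul_le_mul_of_nonneg_left _ hβpos.le
      apply div_le_div₀ (hFpos b hb).le h8 h6 h7
    have hFTCφ : ∫ u in T..b, d u = (Ab b) ^ β - (Ab T) ^ β :=
      intervalIntegral.integral_eq_sub_of_hasDeriv_right_of_le hb hcont hd hint
    have hlow : β * K * (b - T) ≤ ∫ u in T..b, d u := by
      have : β * K * (b - T) = ∫ _ in T..b, β * K := by
        rw [intervalIntegral.integral_const, smul_eq_mul]; ring
      rw [this]
      apply intervalIntegral.integral_mono_on hb intervalIntegrable_const hint
      intro u hu
      have h1 : 0 < F u := hFpos u hu.1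
      have h3 : 0 < Ab u := hAbpos u
      have h5 : (0:ℝ) < (Ab u) ^ C⁻¹ := Real.rpow_pos_of_pos h3 _
      have := hFK u hu.1
      show β * K ≤ β * (F u / Ab u ^ C⁻¹)
      apply mul_le_mul_of_nonneg_left _ hβpos.le
      rw [le_div_iff₀ h5]
      exact this
    have hφT : (0:ℝ) ≤ (Ab T) ^ β := (Real.rpow_pos_of_pos (hAbpos T) _).le
    linarith [hFTCφ ▸ hlow]
  -- conclusion
  set p : ℝ := C / (C - 1) with hp_def
  have hp : 0 < p := by
    apply div_pos hC0; linarith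
  have hβp : β * p = 1 := by
    have hC1 : C - 1 ≠ 0 := by linarith
    rw [hβ_def, hp_def]; field_simp
  refine ⟨(β * K) ^ p * (2⁻¹ : ℝ) ^ p,
    mul_pos (Real.rpow_pos_of_pos (mul_pos hβpos hK) p)
      (Real.rpow_pos_of_pos (by norm_num) p), ?_⟩
  filter_upwards [eventually_ge_atTop (max (2 * T) (max T 1))] with t ht
  have ht1 : (1:ℝ) ≤ t := le_trans (le_max_right _ _ |>.trans (le_max_right _ _)) ht
  have htT : T ≤ t := le_trans ((le_max_left T 1).trans (le_max_right _ _)) ht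
  have ht2T : 2 * T ≤ t := le_trans (le_max_left _ _) ht
  have htpos : (0:ℝ) < t := by linarith
  have hhalf : t / 2 ≤ t - T := by linarith
  have hhalfpos : (0:ℝ) ≤ t / 2 := by linarith
  have hcl := claim t htT
  have hx : 0 < Ab t := hAbpos t
  have step1 : (β * K * (t - T)) ^ p ≤ Ab t := by
    calc (β * K * (t - T)) ^ p ≤ ((Ab t) ^ β) ^ p :=
          Real.rpow_le_rpow (mul_nonneg (mul_pos hβpos hK).le (by linarith)) hcl hp.le
      _ = (Ab t) ^ (β * p) := (Real.rpow_mul hx.le β p).symm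
      _ = Ab t := by rw [hβp, Real.rpow_one]
  calc (β * K) ^ p * (2⁻¹ : ℝ) ^ p * t ^ p
      = (β * K) ^ p * (2⁻¹ * t) ^ p := by
        rw [Real.mul_rpow (by norm_num) htpos.le]; ring
    _ = (β * K * (2⁻¹ * t)) ^ p :=
        (Real.mul_rpow (mul_pos hβpos hK).le (by linarith)).symm
    _ ≤ (β * K * (t - T)) ^ p := by
        apply Real.rpow_le_rpow (mul_nonneg (mul_pos hβpos hK).le (by linarith)) _ hp.le
        have h9 : (0:ℝ) ≤ t - T - 2⁻¹ * t := by linarith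
        nlinarith [mul_nonneg (mul_pos hβpos hK).le h9]
    _ ≤ Ab t := step1
    _ = A t := hAbeq t htT
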